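/- Per-period identification step: fix an integer k ≥ 1 and adopt the core setup. Let Y_k, Y_{k−1}, Y_k*, Y_{k−1}* be integrable random variables with Y_k* = Y_k a.s. on B_k and Y_{k−1}* = Y_{k−1} a.s. on B_k. Assume parallel trends: for every m ∈ {1,…,k} there exists a 𝒲_m-measurable random variable h_m that is simultaneously a version of the conditional expectation of Y_k* − Y_{k−1}* given 𝒲_m under P(·|B_{m−1}) and a version of the conditional expectation of Y_k* − Y_{k−1}* given 𝒲_m under P(·|B_m). Then E_P[Y_k* − Y_{k−1}*] = φ_{k,k} − φ_{k−1,k}, where φ_{k,k} and φ_{k−1,k} are built from the observed outcomes Y_k and Y_{k−1} respectively by the iterated conditional-expectation recursion, and the conclusion holds for any choice of versions in that recursion. -/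

import Mathlib

open MeasureTheory ProbabilityTheory Filter
open scoped ENNReal

section Aux

variable {Ω : Type*} {𝒲 : MeasurableSpace Ω} [inst : MeasurableSpace Ω] {μ : Measure Ω}
  [IsProbabilityMeasure μ] {B : Set Ω} {ε : ℝ} {p : Ω → ℝ}

lemma aux_null (h𝒲 : 𝒲 ≤ inst) (hB : MeasurableSet B) (hε : 0 < ε)
    (hp : p =ᵐ[μ] μ[B.indicator (fun _ => (1:ℝ))|𝒲]) (hppos : ∀ᵐ ω ∂μ, ε ≤ p ω)
    {N : Set Ω} (hN : MeasurableSet[𝒲] N) (hμN : μ (N ∩ B) = 0) : μ N = 0 := by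
  have hInd : Integrable (B.indicator fun _ => (1:ℝ)) μ := (integrable_const 1).indicator hB
  have hint_p : Integrable p μ := integrable_condExp.congr hp.symm
  have h1 : ∫ x in N, p x ∂μ = (μ (N ∩ B)).toReal := by
    calc ∫ x in N, p x ∂μ
        = ∫ x in N, (μ[B.indicator (fun _ => (1:ℝ))|𝒲]) x ∂μ :=
          integral_congr_ae (ae_restrict_of_ae hp)
      _ = ∫ x in N, B.indicator (fun _ => (1:ℝ)) x ∂μ := setIntegral_condExp h𝒲 hInd hN
      _ = ∫ x in N ∩ B, (1:ℝ) ∂μ := setIntegral_indicator hB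
      _ = (μ (N ∩ B)).toReal := by simp [Measure.real]
  have h2 : ε * (μ N).toReal ≤ ∫ x in N, p x ∂μ := by
    have h3 : ∫ _x in N, ε ∂μ ≤ ∫ x in N, p x ∂μ :=
      integral_mono_ae (integrable_const ε) hint_p.restrict (ae_restrict_of_ae hppos)
    simpa [mul_comm, Measure.real] using h3
  rw [h1, hμN] at h2
  simp only [ENNReal.toReal_zero] at h2
  have h4 : (μ N).toReal = 0 := le_antisymm (by nlinarith) ENNReal.toReal_nonneg
  exact (ENNReal.toReal_eq_zero_iff _).1 h4 |>.resolve_right (measure_ne_top μ N)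

lemma aux_ae_eq (h𝒲 : 𝒲 ≤ inst) (hB : MeasurableSet B) (hε : 0 < ε)
    (hp : p =ᵐ[μ] μ[B.indicator (fun _ => (1:ℝ))|𝒲]) (hppos : ∀ᵐ ω ∂μ, ε ≤ p ω)
    {f g : Ω → ℝ} (hf : Measurable[𝒲] f) (hg : Measurable[𝒲] g)
    (hfg : f =ᵐ[μ.restrict B] g) : f =ᵐ[μ] g := by
  have hN : MeasurableSet[𝒲] {ω | ¬ f ω = g ω} := by
    have h := (measurableSet_eq_fun hf hg).compl
    simpa [Set.compl_setOf] using h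
  have h0 : μ ({ω | ¬ f ω = g ω} ∩ B) = 0 := by
    have h1 : (μ.restrict B) {ω | ¬ f ω = g ω} = 0 := ae_iff.1 hfg
    rwa [Measure.restrict_apply (h𝒲 _ hN)] at h1
  have h2 := aux_null h𝒲 hB hε hp hppos hN h0
  exact ae_iff.2 h2

lemma aux_integrable (h𝒲 : 𝒲 ≤ inst) (hB : MeasurableSet B) (hε : 0 < ε)
    (hp : p =ᵐ[μ] μ[B.indicator (fun _ => (1:ℝ))|𝒲]) (hppos : ∀ᵐ ω ∂μ, ε ≤ p ω)
    {g : Ω → ℝ} (hg : Measurable[𝒲] g) (hgB : Integrable g (μ.restrict B)) :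
    Integrable g μ := by
  set I : Ω → ℝ := B.indicator (fun _ => (1:ℝ)) with hIdef
  have hIint : Integrable I μ := (integrable_const 1).indicator hB
  have hInn : ∀ ω, 0 ≤ I ω := fun ω => by
    by_cases hω : ω ∈ B <;> simp [hIdef, Set.indicator_of_mem, Set.indicator_of_notMem, hω]
  have hIle : ∀ ω, I ω ≤ 1 := fun ω => by
    by_cases hω : ω ∈ B <;> simp [hIdef, Set.indicator_of_mem, Set.indicator_of_notMem, hω]
  have hgm : Measurable g := hg.mono h𝒲 le_rfl
  set G : ℕ → Ω → ℝ := fun n ω => min ‖g ω‖ n with hGdef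
  have hGmeas : ∀ n, Measurable[𝒲] (G n) := by
    intro n
    letI : MeasurableSpace Ω := 𝒲
    exact hg.norm.min measurable_const
  have hGnn : ∀ n ω, 0 ≤ G n ω := fun n ω => le_min (norm_nonneg _) (Nat.cast_nonneg n)
  have hGleg : ∀ n ω, G n ω ≤ ‖g ω‖ := fun n ω => min_le_left _ _
  have hGlen : ∀ n ω, G n ω ≤ n := fun n ω => min_le_right _ _
  have hGint : ∀ n, Integrable (G n) μ := fun n =>
    (integrable_const (n:ℝ)).mono' ((hGmeas n).mono h𝒲 le_rfl).aestronglyMeasurable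
      (ae_of_all _ fun ω => by
        rw [Real.norm_eq_abs, abs_of_nonneg (hGnn n ω)]; exact hGlen n ω)
  have hGIint : ∀ n, Integrable (G n * I) μ := fun n =>
    (integrable_const (n:ℝ)).mono'
      (((hGmeas n).mono h𝒲 le_rfl).mul ((measurable_const (a := (1:ℝ))).indicator hB)).aestronglyMeasurable
      (ae_of_all _ fun ω => by
        have h1 : 0 ≤ G n ω * I ω := mul_nonneg (hGnn n ω) (hInn ω)
        rw [Pi.mul_apply, Real.norm_eq_abs, abs_of_nonneg h1]
        calc G n ω * I ω ≤ G n ω * 1 :=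
              mul_le_mul_of_nonneg_left (hIle ω) (hGnn n ω)
          _ ≤ n := by rw [mul_one]; exact hGlen n ω)
  have habs_ind : Integrable (B.indicator fun ω => ‖g ω‖) μ :=
    (integrable_indicator_iff hB).2 hgB.norm
  set C := ∫ ω, B.indicator (fun ω => ‖g ω‖) ω ∂μ with hCdef
  have hGIle : ∀ n ω, (G n * I) ω ≤ B.indicator (fun ω => ‖g ω‖) ω := by
    intro n ω
    by_cases hω : ω ∈ B
    · simpa [hIdef, Set.indicator_of_mem hω] using hGleg n ω
    · simp [hIdef, Set.indicator_of_notMem hω]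
  have hboundn : ∀ n, ∫ ω, G n ω ∂μ ≤ ε⁻¹ * C := by
    intro n
    have h2 : μ[G n * I|𝒲] =ᵐ[μ] G n * μ[I|𝒲] :=
      condExp_mul_of_stronglyMeasurable_left ((hGmeas n).stronglyMeasurable) (hGIint n) hIint
    have e1 : (fun ω => G n ω * p ω) =ᵐ[μ] μ[G n * I|𝒲] :=
      ((Filter.EventuallyEq.refl _ (G n)).mul hp).trans h2.symm
    have hGpint : Integrable (fun ω => G n ω * p ω) μ := integrable_condExp.congr e1.symm
    have step1 : ε * ∫ ω, G n ω ∂μ ≤ ∫ ω, G n ω * p ω ∂μ := by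
      have h3 : ∫ ω, ε * G n ω ∂μ ≤ ∫ ω, G n ω * p ω ∂μ :=
        integral_mono_ae ((hGint n).const_mul ε) hGpint
          (hppos.mono fun ω hω => by
            simpa [mul_comm] using mul_le_mul_of_nonneg_right hω (hGnn n ω))
      rwa [integral_const_mul] at h3
    have step2 : ∫ ω, G n ω * p ω ∂μ = ∫ ω, (G n * I) ω ∂μ := by
      rw [integral_congr_ae e1]
      exact integral_condExp h𝒲
    have step3 : ∫ ω, (G n * I) ω ∂μ ≤ C :=
      integral_mono_ae (hGIint n) habs_ind (ae_of_all _ (hGIle n))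
    have h5 : ε * ∫ ω, G n ω ∂μ ≤ C := by
      calc ε * ∫ ω, G n ω ∂μ ≤ ∫ ω, G n ω * p ω ∂μ := step1
        _ = ∫ ω, (G n * I) ω ∂μ := step2
        _ ≤ C := step3
    calc ∫ ω, G n ω ∂μ = ε⁻¹ * (ε * ∫ ω, G n ω ∂μ) := by
          rw [← mul_assoc, inv_mul_cancel₀ hε.ne', one_mul]
      _ ≤ ε⁻¹ * C := mul_le_mul_of_nonneg_left h5 (inv_nonneg.2 hε.le)
  refine ⟨hgm.aestronglyMeasurable, ?_⟩
  rw [hasFiniteIntegral_def]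
  have hFmeas : ∀ n, Measurable fun ω => ENNReal.ofReal (G n ω) := fun n =>
    ENNReal.measurable_ofReal.comp ((hGmeas n).mono h𝒲 le_rfl)
  have hFmono : Monotone fun n (ω : Ω) => ENNReal.ofReal (G n ω) := by
    intro a b hab ω
    exact ENNReal.ofReal_le_ofReal (min_le_min le_rfl (Nat.cast_le.2 hab))
  have hFsup : ∀ ω, (⨆ n, ENNReal.ofReal (G n ω)) = (‖g ω‖₊ : ℝ≥0∞) := by
    intro ω
    rw [← ENNReal.ofReal_coe_nnreal, coe_nnnorm]
    refine le_antisymm (iSup_le fun n => ENNReal.ofReal_le_ofReal (hGleg n ω)) ?_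
    refine le_iSup_of_le ⌈‖g ω‖⌉₊ (le_of_eq ?_)
    show ENNReal.ofReal ‖g ω‖ = ENNReal.ofReal (min ‖g ω‖ ((⌈‖g ω‖⌉₊ : ℕ) : ℝ))
    rw [min_eq_left (Nat.le_ceil _)]
  have key : ∫⁻ ω, (‖g ω‖₊ : ℝ≥0∞) ∂μ = ⨆ n, ∫⁻ ω, ENNReal.ofReal (G n ω) ∂μ := by
    rw [← lintegral_iSup hFmeas hFmono]
    exact lintegral_congr fun ω => (hFsup ω).symm
  simp only [enorm_eq_nnnorm]
  rw [key]
  have hb2 : ∀ n, ∫⁻ ω, ENNReal.ofReal (G n ω) ∂μ ≤ ENNReal.ofReal (ε⁻¹ * C) := by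
    intro n
    rw [← ofReal_integral_eq_lintegral_ofReal (hGint n) (ae_of_all _ (hGnn n))]
    exact ENNReal.ofReal_le_ofReal (hboundn n)
  exact lt_of_le_of_lt (iSup_le hb2) ENNReal.ofReal_lt_top

end Aux

/-- Per-period identification step. Under the core setup with horizon `k`,
let `Yk, Yk', Ysk, Ysk'` (standing for `Y_k, Y_{k-1}, Y_k*, Y_{k-1}*`) be integrable
with `Ysk = Yk` a.s. on `B k` and `Ysk' = Yk'` a.s. on `B k`. Assume parallel trends:
for every `1 ≤ m ≤ k` there is a `𝒲 m`-measurable `h` that is a version of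
`E[Ysk - Ysk' | 𝒲 m]` both under `P[|B (m-1)]` and under `P[|B m]`. Then for any choice
of versions `Qk, Qk'` in the iterated conditional-expectation recursions built from the
observed outcomes `Yk, Yk'`,
`E_P[Ysk - Ysk'] = φ_{k,k} - φ_{k-1,k} = E_P[Qk 1] - E_P[Qk' 1]`. -/
theorem per_period_identification
    {Ω : Type*} [inst : MeasurableSpace Ω] (P : Measure Ω) [IsProbabilityMeasure P]
    (k : ℕ) (hk : 1 ≤ k)
    (B : ℕ → Set Ω)
    (hBmeas : ∀ m, m ≤ k → MeasurableSet (B m))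
    (hBmono : ∀ m, m < k → B (m + 1) ⊆ B m)
    (hB0 : P (B 0) = 1)
    (hBk : 0 < P (B k))
    (𝒲 : ℕ → MeasurableSpace Ω)
    (h𝒲le : ∀ m, 1 ≤ m → m ≤ k → 𝒲 m ≤ inst)
    (h𝒲mono : ∀ m, 1 ≤ m → m < k → 𝒲 m ≤ 𝒲 (m + 1))
    (ε : ℝ) (hε : 0 < ε)
    (p : ℕ → Ω → ℝ)
    (hpmeas : ∀ m, 1 ≤ m → m ≤ k → Measurable[𝒲 m] (p m))
    (hpver : ∀ m, 1 ≤ m → m ≤ k →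
      p m =ᵐ[P[|B (m - 1)]] (P[|B (m - 1)])[(B m).indicator (fun _ => (1 : ℝ))|𝒲 m])
    (hppos : ∀ m, 1 ≤ m → m ≤ k → ∀ᵐ ω ∂P, ε ≤ p m ω)
    (Yk Yk' Ysk Ysk' : Ω → ℝ)
    (hYkint : Integrable Yk P) (hYk'int : Integrable Yk' P)
    (hYskint : Integrable Ysk P) (hYsk'int : Integrable Ysk' P)
    (hconsk : ∀ᵐ ω ∂P, ω ∈ B k → Ysk ω = Yk ω)
    (hconsk' : ∀ᵐ ω ∂P, ω ∈ B k → Ysk' ω = Yk' ω)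
    (hPT : ∀ m, 1 ≤ m → m ≤ k → ∃ h : Ω → ℝ, Measurable[𝒲 m] h ∧
      h =ᵐ[P[|B (m - 1)]] (P[|B (m - 1)])[fun ω => Ysk ω - Ysk' ω|𝒲 m] ∧
      h =ᵐ[P[|B m]] (P[|B m])[fun ω => Ysk ω - Ysk' ω|𝒲 m])
    (Qk Qk' : ℕ → Ω → ℝ)
    (hQktop : Qk (k + 1) = Yk)
    (hQkmeas : ∀ m, 1 ≤ m → m ≤ k → Measurable[𝒲 m] (Qk m))
    (hQkver : ∀ m, 1 ≤ m → m ≤ k → Qk m =ᵐ[P[|B m]] (P[|B m])[Qk (m + 1)|𝒲 m])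
    (hQk'top : Qk' (k + 1) = Yk')
    (hQk'meas : ∀ m, 1 ≤ m → m ≤ k → Measurable[𝒲 m] (Qk' m))
    (hQk'ver : ∀ m, 1 ≤ m → m ≤ k → Qk' m =ᵐ[P[|B m]] (P[|B m])[Qk' (m + 1)|𝒲 m]) :
    ∫ ω, (Ysk ω - Ysk' ω) ∂P = (∫ ω, Qk 1 ω ∂P) - ∫ ω, Qk' 1 ω ∂P := by
  -- monotonicity of the events
  have hBsub : ∀ b, b ≤ k → ∀ a, a ≤ b → B b ⊆ B a := by
    intro b
    induction b with
    | zero =>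
      intro _ a ha
      have ha0 : a = 0 := Nat.le_zero.1 ha
      subst ha0; exact subset_rfl
    | succ b ih =>
      intro hbk a hab
      rcases Nat.lt_or_ge a (b + 1) with hlt | hge
      · exact (hBmono b (by omega)).trans (ih (by omega) a (by omega))
      · have : a = b + 1 := by omega
        subst this; exact subset_rfl
  have hBpos : ∀ m, m ≤ k → P (B m) ≠ 0 := fun m hm =>
    (lt_of_lt_of_le hBk (measure_mono (hBsub k le_rfl m hm))).ne'
  have hProb : ∀ m, m ≤ k → IsProbabilityMeasure (P[|B m]) := fun m hm =>
    cond_isProbabilityMeasure (hBpos m hm)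
  -- filter identifications
  have hae : ∀ m, m ≤ k → ae (P[|B m]) = ae (P.restrict (B m)) := by
    intro m hm
    rw [ProbabilityTheory.cond]
    exact Filter.ext fun s => by simp [mem_ae_iff, ENNReal.inv_ne_zero.2 (measure_ne_top P _)]
  have hres : ∀ m, 1 ≤ m → m ≤ k →
      (P[|B (m - 1)]).restrict (B m) = (P (B (m - 1)))⁻¹ • P.restrict (B m) := by
    intro m hm1 hmk
    rw [ProbabilityTheory.cond, Measure.restrict_smul,
      Measure.restrict_restrict_of_subset (hBsub m hmk (m - 1) (Nat.sub_le m 1))]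
  have haeres : ∀ m, 1 ≤ m → m ≤ k →
      ae ((P[|B (m - 1)]).restrict (B m)) = ae (P.restrict (B m)) := by
    intro m hm1 hmk
    rw [hres m hm1 hmk]
    exact Filter.ext fun s => by simp [mem_ae_iff, ENNReal.inv_ne_zero.2 (measure_ne_top P _)]
  have hint_iff : ∀ m, m ≤ k → ∀ f : Ω → ℝ,
      Integrable f (P[|B m]) ↔ Integrable f (P.restrict (B m)) := by
    intro m hm f
    rw [ProbabilityTheory.cond]
    exact integrable_smul_measure (ENNReal.inv_ne_zero.2 (measure_ne_top _ _))
      (ENNReal.inv_ne_top.2 (hBpos m hm))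
  have hμ0 : P[|B 0] = P := by
    have hc : P (B 0)ᶜ = 0 := by
      rw [measure_compl (hBmeas 0 (by omega)) (measure_ne_top P (B 0)), hB0]
      simp
    rw [ProbabilityTheory.cond, hB0, inv_one, one_smul,
      Measure.restrict_congr_set (ae_eq_univ.2 hc), Measure.restrict_univ]
  set D : Ω → ℝ := fun ω => Ysk ω - Ysk' ω with hD
  have hDint : Integrable D P := hYskint.sub hYsk'int
  -- the unified one-period step
  have step : ∀ m, 1 ≤ m → m ≤ k → ∀ f f' : Ω → ℝ,
      Integrable f (P[|B m]) → Integrable f' (P[|B m]) →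
      ((P[|B m])[fun ω => f ω - f' ω|𝒲 m] =ᵐ[P[|B m]] (P[|B m])[D|𝒲 m]) →
      Qk m =ᵐ[P[|B m]] (P[|B m])[f|𝒲 m] → Qk' m =ᵐ[P[|B m]] (P[|B m])[f'|𝒲 m] →
      Integrable (Qk m) (P[|B (m - 1)]) ∧ Integrable (Qk' m) (P[|B (m - 1)]) ∧
      (fun ω => Qk m ω - Qk' m ω) =ᵐ[P[|B (m - 1)]] (P[|B (m - 1)])[D|𝒲 m] := by
    intro m hm1 hmk f f' hfint hf'int hcond hQ hQ'
    haveI := hProb m hmk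
    haveI := hProb (m - 1) (le_trans (Nat.sub_le m 1) hmk)
    have hppos' : ∀ᵐ ω ∂(P[|B (m - 1)]), ε ≤ p m ω :=
      (hppos m hm1 hmk).filter_mono cond_absolutelyContinuous.ae_le
    have efil : ae (P[|B m]) = ae ((P[|B (m - 1)]).restrict (B m)) :=
      (hae m hmk).trans (haeres m hm1 hmk).symm
    -- difference at level m
    have hsub : (fun ω => Qk m ω - Qk' m ω) =ᵐ[P[|B m]] (P[|B m])[D|𝒲 m] := by
      have h1 := condExp_sub (μ := P[|B m]) (m := 𝒲 m) hfint hf'int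
      exact (hQ.sub hQ').trans (h1.symm.trans hcond)
    obtain ⟨h, hmeas, hPT1, hPT2⟩ := hPT m hm1 hmk
    have hsubh : (fun ω => Qk m ω - Qk' m ω) =ᵐ[P[|B m]] h := hsub.trans hPT2.symm
    have hsubh' : (fun ω => Qk m ω - Qk' m ω) =ᵐ[P[|B (m - 1)]] h := by
      refine aux_ae_eq (h𝒲le m hm1 hmk) (hBmeas m hmk) hε (hpver m hm1 hmk) hppos'
        ((hQkmeas m hm1 hmk).sub (hQk'meas m hm1 hmk)) hmeas ?_
      have h2 := hsubh
      rw [efil] at h2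
      exact h2
    have hsubfinal : (fun ω => Qk m ω - Qk' m ω) =ᵐ[P[|B (m - 1)]] (P[|B (m - 1)])[D|𝒲 m] :=
      hsubh'.trans hPT1
    -- integrability lifts
    have hlift : ∀ g : Ω → ℝ, Measurable[𝒲 m] g → (Qk m =ᵐ[P[|B m]] g ∨ Qk' m =ᵐ[P[|B m]] g) →
        Integrable g (P[|B m]) → True := fun _ _ _ _ => trivial
    have hciQ : Integrable ((P[|B m])[f|𝒲 m]) (P[|B (m - 1)]) := by
      refine aux_integrable (h𝒲le m hm1 hmk) (hBmeas m hmk) hε (hpver m hm1 hmk) hppos'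
        stronglyMeasurable_condExp.measurable ?_
      rw [hres m hm1 hmk]
      exact (integrable_smul_measure (ENNReal.inv_ne_zero.2 (measure_ne_top _ _))
        (ENNReal.inv_ne_top.2 (hBpos (m - 1) (le_trans (Nat.sub_le m 1) hmk)))).2
        ((hint_iff m hmk _).1 integrable_condExp)
    have hciQ' : Integrable ((P[|B m])[f'|𝒲 m]) (P[|B (m - 1)]) := by
      refine aux_integrable (h𝒲le m hm1 hmk) (hBmeas m hmk) hε (hpver m hm1 hmk) hppos'
        stronglyMeasurable_condExp.measurable ?_
      rw [hres m hm1 hmk]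
      exact (integrable_smul_measure (ENNReal.inv_ne_zero.2 (measure_ne_top _ _))
        (ENNReal.inv_ne_top.2 (hBpos (m - 1) (le_trans (Nat.sub_le m 1) hmk)))).2
        ((hint_iff m hmk _).1 integrable_condExp)
    have hQe : Qk m =ᵐ[P[|B (m - 1)]] (P[|B m])[f|𝒲 m] := by
      refine aux_ae_eq (h𝒲le m hm1 hmk) (hBmeas m hmk) hε (hpver m hm1 hmk) hppos'
        (hQkmeas m hm1 hmk) stronglyMeasurable_condExp.measurable ?_
      have h2 := hQ
      rw [efil] at h2
      exact h2
    have hQ'e : Qk' m =ᵐ[P[|B (m - 1)]] (P[|B m])[f'|𝒲 m] := by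
      refine aux_ae_eq (h𝒲le m hm1 hmk) (hBmeas m hmk) hε (hpver m hm1 hmk) hppos'
        (hQk'meas m hm1 hmk) stronglyMeasurable_condExp.measurable ?_
      have h2 := hQ'
      rw [efil] at h2
      exact h2
    exact ⟨hciQ.congr hQe.symm, hciQ'.congr hQ'e.symm, hsubfinal⟩
  -- downward induction
  have key : ∀ n, ∀ m, 1 ≤ m → m ≤ k → k - m = n →
      Integrable (Qk m) (P[|B (m - 1)]) ∧ Integrable (Qk' m) (P[|B (m - 1)]) ∧
      (fun ω => Qk m ω - Qk' m ω) =ᵐ[P[|B (m - 1)]] (P[|B (m - 1)])[D|𝒲 m] := by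
    intro n
    induction n with
    | zero =>
      intro m hm1 hmk hn
      have hmk' : m = k := by omega
      subst hmk'
      haveI := hProb m le_rfl
      have hmem : ∀ᵐ ω ∂(P[|B m]), ω ∈ B m := by
        have h0 : (P[|B m]) (B m)ᶜ = 0 := by
          rw [ProbabilityTheory.cond, Measure.smul_apply,
            Measure.restrict_apply (hBmeas m le_rfl).compl]
          simp [Set.compl_inter_self]
        exact ae_iff.mpr h0
      have h1 : ∀ᵐ ω ∂(P[|B m]), ω ∈ B m → Ysk ω = Yk ω :=
        hconsk.filter_mono cond_absolutelyContinuous.ae_le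
      have h2 : ∀ᵐ ω ∂(P[|B m]), ω ∈ B m → Ysk' ω = Yk' ω :=
        hconsk'.filter_mono cond_absolutelyContinuous.ae_le
      have hcons : (fun ω => Yk ω - Yk' ω) =ᵐ[P[|B m]] D := by
        filter_upwards [hmem, h1, h2] with ω hω e1 e2
        show Yk ω - Yk' ω = D ω
        rw [hD]
        dsimp only
        rw [e1 hω, e2 hω]
      have hcond : (P[|B m])[fun ω => Yk ω - Yk' ω|𝒲 m] =ᵐ[P[|B m]] (P[|B m])[D|𝒲 m] :=
        condExp_congr_ae hcons
      have hYkc : Integrable Yk (P[|B m]) := (hint_iff m le_rfl Yk).2 hYkint.restrict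
      have hYk'c : Integrable Yk' (P[|B m]) := (hint_iff m le_rfl Yk').2 hYk'int.restrict
      have hQv : Qk m =ᵐ[P[|B m]] (P[|B m])[Yk|𝒲 m] := by
        have := hQkver m hm1 le_rfl
        rwa [hQktop] at this
      have hQ'v : Qk' m =ᵐ[P[|B m]] (P[|B m])[Yk'|𝒲 m] := by
        have := hQk'ver m hm1 le_rfl
        rwa [hQk'top] at this
      exact step m hm1 le_rfl Yk Yk' hYkc hYk'c hcond hQv hQ'v
    | succ n ih =>
      intro m hm1 hmk hn
      have hmlt : m < k := by omega
      obtain ⟨ih1, ih2, ih3⟩ := ih (m + 1) (by omega) (by omega) (by omega)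
      simp only [Nat.add_sub_cancel] at ih1 ih2 ih3
      haveI := hProb m (le_of_lt hmlt)
      have hcond : (P[|B m])[fun ω => Qk (m + 1) ω - Qk' (m + 1) ω|𝒲 m] =ᵐ[P[|B m]]
          (P[|B m])[D|𝒲 m] := by
        have t1 := condExp_congr_ae (μ := P[|B m]) (m := 𝒲 m) ih3
        have t2 := condExp_condExp_of_le (μ := P[|B m]) (f := D)
          (h𝒲mono m hm1 hmlt) (h𝒲le (m + 1) (by omega) (by omega))
        exact t1.trans t2
      exact step m hm1 (le_of_lt hmlt) (Qk (m + 1)) (Qk' (m + 1)) ih1 ih2 hcond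
        (hQkver m hm1 (le_of_lt hmlt)) (hQk'ver m hm1 (le_of_lt hmlt))
  obtain ⟨h1, h2, h3⟩ := key (k - 1) 1 le_rfl hk (by omega)
  simp only [Nat.sub_self] at h1 h2 h3
  rw [hμ0] at h1 h2 h3
  calc ∫ ω, D ω ∂P = ∫ ω, (P[D|𝒲 1]) ω ∂P := (integral_condExp (h𝒲le 1 le_rfl hk)).symm
    _ = ∫ ω, (Qk 1 ω - Qk' 1 ω) ∂P := integral_congr_ae h3.symm
    _ = (∫ ω, Qk 1 ω ∂P) - ∫ ω, Qk' 1 ω ∂P := integral_sub h1 h2
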